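/- Let G be a second countable Hausdorff topological group with topology σ, and let ω be a Hausdorff group topology on G coarser than σ. Then there exists a Hausdorff group topology ω' on G, coarser than ω, such that ω' is second countable. -/

import Mathlib

open Set Filter Topology TopologicalSpace Pointwise

set_option linter.unusedSectionVars false
set_option maxHeartbeats 1000000

/-! Auxiliary machinery for statement 13. -/

/-- Decoding of a natural number into a quadruple. -/
def Stmt13.dec4 (n : ℕ) : ℕ × ℕ × ℕ × ℕ := (Denumerable.eqv (ℕ × ℕ × ℕ × ℕ)).symm n

lemma Stmt13.exists_dec4 (k o i m : ℕ) : ∃ n, m ≤ n ∧ (dec4 n).1 = k ∧ (dec4 n).2.1 = o ∧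
    (dec4 n).2.2.1 = i := by
  have hinj : Function.Injective (fun s : ℕ => (Denumerable.eqv (ℕ × ℕ × ℕ × ℕ)) (k, o, i, s)) :=
    (Denumerable.eqv (ℕ × ℕ × ℕ × ℕ)).injective.comp (fun a b h => by simpa using h)
  obtain ⟨n, ⟨s, rfl⟩, hn⟩ := (Set.infinite_range_of_injective hinj).exists_gt m
  have hd : dec4 ((Denumerable.eqv (ℕ × ℕ × ℕ × ℕ)) (k, o, i, s)) = (k, o, i, s) :=
    Equiv.symm_apply_apply _ _
  exact ⟨_, hn.le, by rw [hd], by rw [hd], by rw [hd]⟩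

namespace Stmt13

section Aux

variable {G : Type*} [Group G] [ts : TopologicalSpace G]

/-- An open symmetric neighborhood of `1`. -/
def Nice (V : Set G) : Prop := IsOpen V ∧ (1:G) ∈ V ∧ V⁻¹ = V

lemma nice_univ : Nice (Set.univ : Set G) := ⟨isOpen_univ, mem_univ _, Set.inv_univ⟩

lemma nice_symm {V : Set G} (hV : Nice V) {x : G} (hx : x ∈ V) : x⁻¹ ∈ V := by
  rw [← hV.2.2]; simpa using hx

lemma subset_mul_left' {V W : Set G} (h1 : (1:G) ∈ V) : W ⊆ V * W := fun x hx => by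
  simpa using Set.mul_mem_mul h1 hx

lemma subset_mul_right' {V W : Set G} (h1 : (1:G) ∈ W) : V ⊆ V * W := fun x hx => by
  simpa using Set.mul_mem_mul hx h1

lemma subset_cube {V : Set G} (hV : Nice V) : V ⊆ V * V * V :=
  (subset_mul_right' hV.2.1).trans (subset_mul_right' hV.2.1)

lemma sq_subset_cube {V : Set G} (hV : Nice V) : V * V ⊆ V * V * V :=
  subset_mul_right' hV.2.1

lemma nice_inter {V W : Set G} (hV : Nice V) (hW : Nice W) : Nice (V ∩ W) :=
  ⟨hV.1.inter hW.1, ⟨hV.2.1, hW.2.1⟩, by rw [Set.inter_inv, hV.2.2, hW.2.2]⟩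

variable [IsTopologicalGroup G]

lemma nice_symmetrize {A : Set G} (hA : IsOpen A) (h1 : (1:G) ∈ A) : Nice (A ∩ A⁻¹) :=
  ⟨hA.inter hA.inv, ⟨h1, by simpa using h1⟩, by rw [Set.inter_inv, inv_inv, Set.inter_comm]⟩

lemma exists_shrink {V : Set G} (hV : Nice V) :
    ∃ W : Set G, Nice W ∧ W * W * W ⊆ V := by
  obtain ⟨W1, hW1o, hW11, hW1⟩ := exists_open_nhds_one_mul_subset (hV.1.mem_nhds hV.2.1)
  obtain ⟨W2, hW2o, hW21, hW2⟩ := exists_open_nhds_one_mul_subset (hW1o.mem_nhds hW11)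
  have hW2sub : W2 ⊆ W1 := fun x hx => by simpa using hW2 (Set.mul_mem_mul hx hW21)
  refine ⟨W2 ∩ W2⁻¹, nice_symmetrize hW2o hW21, ?_⟩
  have hsub : W2 ∩ W2⁻¹ ⊆ W2 := inter_subset_left
  rintro x ⟨y, ⟨a, ha, b, hb, rfl⟩, z, hz, rfl⟩
  exact hW1 (Set.mul_mem_mul (hW2 (Set.mul_mem_mul (hsub ha) (hsub hb))) (hW2sub (hsub hz)))

/-- conjugation preimage: `{x : c⁻¹ x c ∈ V}` -/
def ConjSet (c : G) (V : Set G) : Set G := (fun g => c⁻¹ * g * c) ⁻¹' V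

lemma nice_conjSet {c : G} {V : Set G} (hV : Nice V) : Nice (ConjSet c V) := by
  refine ⟨hV.1.preimage (by continuity), by simp [ConjSet, hV.2.1], ?_⟩
  ext x
  simp only [ConjSet, Set.mem_inv, Set.mem_preimage]
  have key : c⁻¹ * x⁻¹ * c = (c⁻¹ * x * c)⁻¹ := by group
  rw [key]
  exact ⟨fun h => by simpa using nice_symm hV h, fun h => nice_symm hV h⟩

open Classical in
/-- A choice of an open symmetric neighborhood whose cube is contained in `V`. -/
noncomputable def shrink (V : Set G) : Set G :=
  if h : Nice V then (exists_shrink h).choose else Set.univ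

lemma shrink_nice {V : Set G} (hV : Nice V) : Nice (shrink V) := by
  rw [shrink, dif_pos hV]; exact (exists_shrink hV).choose_spec.1

lemma shrink_cube {V : Set G} (hV : Nice V) : shrink V * shrink V * shrink V ⊆ V := by
  rw [shrink, dif_pos hV]; exact (exists_shrink hV).choose_spec.2

/-- The recursively defined countable family of open symmetric neighborhoods of `1`:
closed under shrinking, conjugation by elements of the range of `e`, intersections with
the symmetrized `U i`, and pairwise intersections. -/
noncomputable def BB (U : ℕ → Set G) (e : ℕ → G) : ℕ → Set G
  | 0 => Set.univ
  | (n+1) =>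
    if hk : (dec4 n).1 ≤ n then
      if (dec4 n).2.1 = 0 then shrink (BB U e (dec4 n).1)
      else if (dec4 n).2.1 = 1 then ConjSet (e (dec4 n).2.2.1) (BB U e (dec4 n).1)
      else if (dec4 n).2.1 = 2 then
        BB U e (dec4 n).1 ∩ (U (dec4 n).2.2.1 ∩ (U (dec4 n).2.2.1)⁻¹)
      else if hi : (dec4 n).2.2.1 ≤ n then BB U e (dec4 n).1 ∩ BB U e (dec4 n).2.2.1
      else Set.univ
    else Set.univ
  decreasing_by all_goals omega

variable {U : ℕ → Set G} {e : ℕ → G}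

lemma BB_nice (hUo : ∀ n, IsOpen (U n)) (hU1 : ∀ n, (1:G) ∈ U n) :
    ∀ n, Nice (BB U e n) := by
  intro n
  induction n using Nat.strong_induction_on with
  | _ n ih =>
    cases n with
    | zero => rw [BB]; exact nice_univ
    | succ m =>
      rw [BB]
      split_ifs with h1 h2 h3 h4 h5
      · exact shrink_nice (ih _ (by omega))
      · exact nice_conjSet (ih _ (by omega))
      · exact nice_inter (ih _ (by omega)) (nice_symmetrize (hUo _) (hU1 _))
      · exact nice_inter (ih _ (by omega)) (ih _ (by omega))
      · exact nice_univ
      · exact nice_univ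

lemma BB_exists_shrink (k : ℕ) : ∃ j, BB U e j = shrink (BB U e k) := by
  obtain ⟨n, hn, h1, h2, _⟩ := exists_dec4 k 0 0 k
  exact ⟨n + 1, by rw [BB, dif_pos (h1 ▸ hn), h1, if_pos h2]⟩

lemma BB_exists_conj (k i : ℕ) : ∃ j, BB U e j = ConjSet (e i) (BB U e k) := by
  obtain ⟨n, hn, h1, h2, h3⟩ := exists_dec4 k 1 i k
  refine ⟨n + 1, ?_⟩
  rw [BB, dif_pos (h1 ▸ hn), h1, h2, h3]
  norm_num

lemma BB_exists_meetU (k m : ℕ) : ∃ j, BB U e j = BB U e k ∩ (U m ∩ (U m)⁻¹) := by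
  obtain ⟨n, hn, h1, h2, h3⟩ := exists_dec4 k 2 m k
  refine ⟨n + 1, ?_⟩
  rw [BB, dif_pos (h1 ▸ hn), h1, h2, h3]
  norm_num

lemma BB_exists_meetB (k i : ℕ) : ∃ j, BB U e j = BB U e k ∩ BB U e i := by
  obtain ⟨n, hn, h1, h2, h3⟩ := exists_dec4 k 3 i (max k i)
  refine ⟨n + 1, ?_⟩
  have hk : (dec4 n).1 ≤ n := h1 ▸ le_trans (le_max_left _ _) hn
  have hi : (dec4 n).2.2.1 ≤ n := h3 ▸ le_trans (le_max_right _ _) hn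
  rw [BB, dif_pos hk, h1, h2, h3, dif_pos (h3 ▸ hi)]
  norm_num

lemma BB_exists_cube (hUo : ∀ n, IsOpen (U n)) (hU1 : ∀ n, (1:G) ∈ U n) (k : ℕ) :
    ∃ j, BB U e j * BB U e j * BB U e j ⊆ BB U e k := by
  obtain ⟨j, hj⟩ := BB_exists_shrink (U := U) (e := e) k
  exact ⟨j, by rw [hj]; exact shrink_cube (BB_nice hUo hU1 k)⟩

lemma nice_cover (he : DenseRange e) {V : Set G} (hV : Nice V) (x : G) :
    ∃ i, ∃ w ∈ V, x = e i * w := by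
  have hop : IsOpen ((x * ·) '' V) := isOpenMap_mul_left x V hV.1
  have hne : ((x * ·) '' V).Nonempty := ⟨x * 1, Set.mem_image_of_mem _ hV.2.1⟩
  obtain ⟨i, hi⟩ := he.exists_mem_open hop hne
  obtain ⟨v, hv, hxe⟩ := hi
  refine ⟨i, v⁻¹, nice_symm hV hv, ?_⟩
  rw [← hxe]; group

variable (U e) in
/-- The group filter basis generated by the family `BB U e`. -/
noncomputable def gfb (hUo : ∀ n, IsOpen (U n)) (hU1 : ∀ n, (1:G) ∈ U n)
    (he : DenseRange e) : GroupFilterBasis G where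
  sets := Set.range (BB U e)
  nonempty := ⟨BB U e 0, ⟨0, rfl⟩⟩
  inter_sets := by
    rintro x y ⟨k, rfl⟩ ⟨i, rfl⟩
    obtain ⟨j, hj⟩ := BB_exists_meetB (U := U) (e := e) k i
    exact ⟨BB U e j, ⟨j, rfl⟩, hj ▸ subset_rfl⟩
  one' := by rintro x ⟨k, rfl⟩; exact (BB_nice hUo hU1 k).2.1
  mul' := by
    rintro x ⟨k, rfl⟩
    obtain ⟨j, hj⟩ := BB_exists_cube (U := U) (e := e) hUo hU1 k
    exact ⟨BB U e j, ⟨j, rfl⟩, (sq_subset_cube (BB_nice hUo hU1 j)).trans hj⟩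
  inv' := by
    rintro x ⟨k, rfl⟩
    exact ⟨BB U e k, ⟨k, rfl⟩, fun y hy => nice_symm (BB_nice hUo hU1 k) hy⟩
  conj' := by
    rintro x₀ x ⟨k, rfl⟩
    obtain ⟨j1, hj1⟩ := BB_exists_cube (U := U) (e := e) hUo hU1 k
    obtain ⟨i, w, hw, hx⟩ := nice_cover he (BB_nice hUo hU1 j1) x₀⁻¹
    obtain ⟨j2, hj2⟩ := BB_exists_conj (U := U) (e := e) j1 i
    refine ⟨BB U e j2, ⟨j2, rfl⟩, ?_⟩
    intro u hu
    have hmid : (e i)⁻¹ * u * (e i) ∈ BB U e j1 := by rw [hj2] at hu; exact hu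
    have hx₀ : x₀ = w⁻¹ * (e i)⁻¹ := by rw [← inv_inv x₀, hx, mul_inv_rev]
    have hexp : x₀ * u * x₀⁻¹ = w⁻¹ * ((e i)⁻¹ * u * (e i)) * w := by
      rw [hx₀]; group
    show x₀ * u * x₀⁻¹ ∈ BB U e k
    rw [hexp]
    exact hj1 (Set.mul_mem_mul (Set.mul_mem_mul (nice_symm (BB_nice hUo hU1 j1) hw) hmid) hw)

theorem aux {G : Type*} [Group G] [ts : TopologicalSpace G] [IsTopologicalGroup G]
    (U : ℕ → Set G) (hUo : ∀ n, IsOpen (U n)) (hU1 : ∀ n, (1:G) ∈ U n)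
    (hUsep : ∀ x : G, x ≠ 1 → ∃ n, x ∉ U n)
    (e : ℕ → G) (he : DenseRange e) :
    ∃ ω' : TopologicalSpace G, ts ≤ ω' ∧ @IsTopologicalGroup G ω' _ ∧ @T2Space G ω' ∧
      @SecondCountableTopology G ω' := by
  classical
  set B := gfb U e hUo hU1 he with hB
  have hBsets : ∀ {V : Set G}, V ∈ B ↔ V ∈ Set.range (BB U e) := fun {V} => Iff.rfl
  have hnice := BB_nice (U := U) (e := e) hUo hU1
  refine ⟨B.topology, ?_, B.isTopologicalGroup, ?_, ?_⟩
  · -- ts ≤ B.topology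
    rw [TopologicalSpace.le_def]
    intro O hO
    rw [isOpen_iff_mem_nhds]
    intro x hx
    have hO' : O ∈ @nhds G B.topology x :=
      (@IsOpen.mem_nhds G B.topology x O hO hx)
    obtain ⟨V, hVmem, hVsub⟩ := (B.nhds_hasBasis x).mem_iff.mp hO'
    obtain ⟨k, rfl⟩ := hBsets.mp hVmem
    have hop : IsOpen ((x * ·) '' BB U e k) := isOpenMap_mul_left x _ (hnice k).1
    have hxmem : x ∈ (x * ·) '' BB U e k := ⟨1, (hnice k).2.1, mul_one x⟩
    exact Filter.mem_of_superset (hop.mem_nhds hxmem) hVsub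
  · -- T2
    refine @IsTopologicalGroup.t2Space_of_one_sep G B.topology _ B.isTopologicalGroup ?_
    intro x hx
    obtain ⟨m, hm⟩ := hUsep x hx
    obtain ⟨j, hj⟩ := BB_exists_meetU (U := U) (e := e) 0 m
    refine ⟨BB U e j, B.mem_nhds_one ⟨j, rfl⟩, ?_⟩
    intro hmem
    rw [hj] at hmem
    exact hm hmem.2.1
  · -- second countable
    set base : Set (Set G) :=
      Set.range (fun p : ℕ × ℕ => @interior G B.topology ((e p.1 * ·) '' (BB U e p.2)))
      with hbase
    have hcnt : base.Countable := Set.countable_range _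
    have htb : @IsTopologicalBasis G B.topology base := by
      refine @isTopologicalBasis_of_isOpen_of_nhds G B.topology base ?_ ?_
      · rintro u ⟨p, rfl⟩; exact @isOpen_interior G B.topology _
      · intro a O ha hO
        obtain ⟨V, hVmem, hVsub⟩ := (B.nhds_hasBasis a).mem_iff.mp
          (@IsOpen.mem_nhds G B.topology a O hO ha)
        obtain ⟨k, rfl⟩ := hBsets.mp hVmem
        obtain ⟨j1, hj1⟩ := BB_exists_cube (U := U) (e := e) hUo hU1 k
        obtain ⟨j2, hj2⟩ := BB_exists_cube (U := U) (e := e) hUo hU1 j1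
        have hj2sub : BB U e j2 ⊆ BB U e j1 := (subset_cube (hnice j2)).trans hj2
        have hj1sub : BB U e j1 ⊆ BB U e k := (subset_cube (hnice j1)).trans hj1
        obtain ⟨i, w, hw, haw⟩ := nice_cover he (hnice j2) a
        -- a = e i * w, w ∈ BB j2
        refine ⟨@interior G B.topology ((e i * ·) '' BB U e j1), ⟨(i, j1), rfl⟩, ?_, ?_⟩
        · -- a ∈ interior E1; indeed a ∈ (e i *·) '' BB j2 ⊆ interior E1
          have hsubint : (e i * ·) '' BB U e j2 ⊆
              @interior G B.topology ((e i * ·) '' BB U e j1) := by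
            rintro y ⟨v, hv, rfl⟩
            rw [@mem_interior_iff_mem_nhds G B.topology _ _]
            refine (B.nhds_hasBasis _).mem_iff.mpr ⟨BB U e j2, ⟨j2, rfl⟩, ?_⟩
            rintro z ⟨u, hu, rfl⟩
            exact ⟨v * u, hj2 (sq_subset_cube (hnice j2) (Set.mul_mem_mul hv hu)),
              (mul_assoc (e i) v u).symm⟩
          exact hsubint ⟨w, hw, haw.symm⟩
        · -- interior E1 ⊆ O
          refine (@interior_subset G B.topology _).trans ?_
          rintro y ⟨v, hv, rfl⟩
          refine hVsub ⟨w⁻¹ * v, ?_, ?_⟩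
          · exact hj1 (sq_subset_cube (hnice j1)
              (Set.mul_mem_mul (hj2sub (nice_symm (hnice j2) hw)) hv))
          · show a * (w⁻¹ * v) = e i * v
            rw [haw]; group
    exact @IsTopologicalBasis.secondCountableTopology G B.topology base htb hcnt

end Aux

end Stmt13

/-- Let `G` be a second countable Hausdorff topological group with topology
`σ`, and let `ω` be a Hausdorff group topology on `G` coarser than `σ`. Then there exists a
Hausdorff group topology `ω'` on `G`, coarser than `ω`, such that `ω'` is second countable.

(In Mathlib's order on `TopologicalSpace G`, "coarser" corresponds to `≤` from the finer
topology to the coarser one.) -/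
theorem stmt13 {G : Type*} [Group G] (σ ω : TopologicalSpace G)
    (hσgrp : @IsTopologicalGroup G σ _) (hσt2 : @T2Space G σ)
    (hσsc : @SecondCountableTopology G σ)
    (hωgrp : @IsTopologicalGroup G ω _) (hωt2 : @T2Space G ω)
    (hcoarser : σ ≤ ω) :
    ∃ ω' : TopologicalSpace G, ω ≤ ω' ∧ @IsTopologicalGroup G ω' _ ∧ @T2Space G ω' ∧
      @SecondCountableTopology G ω' := by
  classical
  have hωσopen : ∀ s : Set G, @IsOpen G ω s → @IsOpen G σ s :=
    fun s hs => TopologicalSpace.le_def.mp hcoarser s hs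
  -- a sequence with σ-dense (hence ω-dense) range
  have hsep : @SeparableSpace G σ := @SecondCountableTopology.to_separableSpace G σ hσsc
  have hne : Nonempty G := ⟨1⟩
  set e : ℕ → G := @TopologicalSpace.denseSeq G σ hsep hne with he_def
  have heσ : @Dense G σ (Set.range e) := @TopologicalSpace.denseRange_denseSeq G σ hsep hne
  have heω : @DenseRange G ω ℕ e := by
    show @Dense G ω (Set.range e)
    rw [@dense_iff_inter_open G ω _]
    intro O hO hOne
    exact (@dense_iff_inter_open G σ _).mp heσ O (hωσopen O hO) hOne
  -- a countable separating family of ω-neighborhoods of 1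
  have hsepfam := fun x : {y : G // y ≠ (1:G)} => @t2_separation G ω hωt2 (1:G) x.1 (Ne.symm x.2)
  choose A V hAo hVo h1A hxV hAV using hsepfam
  have hcov : ({(1:G)}ᶜ : Set G) ⊆ ⋃ x : {y : G // y ≠ (1:G)}, V x := by
    intro y hy
    exact Set.mem_iUnion.mpr ⟨⟨y, Set.mem_compl_singleton_iff.mp hy⟩,
      hxV ⟨y, Set.mem_compl_singleton_iff.mp hy⟩⟩
  have hher : @HereditarilyLindelofSpace G σ :=
    @SecondCountableTopology.toHereditarilyLindelof G σ hσsc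
  have hLin : @IsLindelof G σ ({(1:G)}ᶜ : Set G) :=
    @HereditarilyLindelof_LindelofSets G σ hher _
  obtain ⟨r, hrc, hrcov⟩ := @IsLindelof.elim_countable_subcover G σ _ _ hLin V
    (fun x => hωσopen _ (hVo x)) hcov
  -- build the countable family `U`
  obtain ⟨Ufam, hUo, hU1, hUsep⟩ :
      ∃ Ufam : ℕ → Set G, (∀ n, @IsOpen G ω (Ufam n)) ∧ (∀ n, (1:G) ∈ Ufam n) ∧
        (∀ x : G, x ≠ 1 → ∃ n, x ∉ Ufam n) := by
    rcases r.eq_empty_or_nonempty with hre | hre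
    · refine ⟨fun _ => Set.univ, fun _ => isOpen_univ, fun _ => Set.mem_univ _, ?_⟩
      intro x hx
      exfalso
      have := hrcov (Set.mem_compl_singleton_iff.mpr hx)
      rw [hre] at this
      simpa using this
    · obtain ⟨f, hf⟩ := hrc.exists_eq_range hre
      refine ⟨fun n => A (f n), fun n => hAo _, fun n => h1A _, ?_⟩
      intro x hx
      obtain ⟨i, hir, hxi⟩ := Set.mem_iUnion₂.mp (hrcov (Set.mem_compl_singleton_iff.mpr hx))
      rw [hf] at hir
      obtain ⟨n, rfl⟩ := hir
      exact ⟨n, fun hmem => Set.disjoint_left.mp (hAV (f n)) hmem hxi⟩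
  exact @Stmt13.aux G _ ω hωgrp Ufam hUo hU1 hUsep e heω
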